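/- Consider a path graph on m vertices partitioned into n sub-paths Ã_1,...,Ã_n (each a set of consecutive vertices). Let P_1,...,P_n be pairwise disjoint sub-paths (sets of consecutive vertices, possibly empty), and let U_1,...,U_k be the connected components of the path after removing ⋃_r P_r (so k ≤ n+1). For each i, let S_i be the number of indices r with P_r ∩ Ã_i ≠ ∅ and L_i the number of components U_j with U_j ∩ Ã_i ≠ ∅. Then ∑_{i=1}^n (S_i + L_i) ≤ 3n. -/

import Mathlib

/-- A set of consecutive integers (a sub-path of the path graph on ℕ). -/
def IsInterval (S : Finset ℕ) : Prop :=
  ∀ a b c : ℕ, a ∈ S → c ∈ S → a ≤ b → b ≤ c → b ∈ S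

/-- If a path on m vertices is partitioned into n sub-paths Ã_1,...,Ã_n,
the P_r are pairwise disjoint sub-paths, and the U_j are the connected components of
the path after removing ⋃_r P_r, then ∑_i (S_i + L_i) ≤ 3n, where S_i counts the P_r
intersecting Ã_i and L_i counts the U_j intersecting Ã_i. -/
theorem stmt_9 (n m k : ℕ) (hn : 0 < n)
    (At : Fin n → Finset ℕ)
    (hAtInt : ∀ i, IsInterval (At i))
    (hAtDisj : ∀ i j, i ≠ j → Disjoint (At i) (At j))
    (hAtUnion : Finset.univ.biUnion At = Finset.Icc 1 m)
    (P : Fin n → Finset ℕ)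
    (hPInt : ∀ r, IsInterval (P r))
    (hPDisj : ∀ r s, r ≠ s → Disjoint (P r) (P s))
    (hPSub : ∀ r, P r ⊆ Finset.Icc 1 m)
    (U : Fin k → Finset ℕ)
    (hUInt : ∀ j, IsInterval (U j))
    (hUNe : ∀ j, (U j).Nonempty)
    (hUDisj : ∀ j j', j ≠ j' → Disjoint (U j) (U j'))
    (hUUnion : Finset.univ.biUnion U = Finset.Icc 1 m \ Finset.univ.biUnion P)
    (hUMax : ∀ j (T : Finset ℕ), IsInterval T → U j ⊆ T →
      T ⊆ Finset.Icc 1 m \ Finset.univ.biUnion P → T = U j) :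
    ∑ i : Fin n,
        ((Finset.univ.filter (fun r : Fin n => (P r ∩ At i).Nonempty)).card +
         (Finset.univ.filter (fun j : Fin k => (U j ∩ At i).Nonempty)).card) ≤ 3 * n := by
  classical
  rcases Nat.eq_zero_or_pos m with hm | hm
  · have hA : ∀ i, At i = ∅ := by
      intro i
      have h1 : At i ⊆ Finset.Icc 1 m :=
        hAtUnion ▸ Finset.subset_biUnion_of_mem At (Finset.mem_univ i)
      subst hm
      simpa using h1
    simp [hA]
  -- main case: m ≥ 1
  set X : Fin n ⊕ Fin k → Finset ℕ := Sum.elim P U with hXdef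
  have hUcompl : ∀ j, U j ⊆ Finset.Icc 1 m \ Finset.univ.biUnion P := by
    intro j x hx
    exact hUUnion ▸ Finset.mem_biUnion.mpr ⟨j, Finset.mem_univ j, hx⟩
  have hXsub : ∀ t, X t ⊆ Finset.Icc 1 m := by
    rintro (r | j)
    · exact hPSub r
    · intro x hx
      exact (Finset.mem_sdiff.mp (hUcompl j hx)).1
  have hXInt : ∀ t, IsInterval (X t) := by rintro (r | j); exacts [hPInt r, hUInt j]
  have hXDisj : ∀ t t', t ≠ t' → Disjoint (X t) (X t') := by
    rintro (r | j) (r' | j') hne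
    · exact hPDisj r r' (by simpa using hne)
    · refine Finset.disjoint_left.mpr fun x hx hx' => ?_
      exact (Finset.mem_sdiff.mp (hUcompl j' hx')).2
        (Finset.mem_biUnion.mpr ⟨r, Finset.mem_univ r, hx⟩)
    · refine Finset.disjoint_left.mpr fun x hx hx' => ?_
      exact (Finset.mem_sdiff.mp (hUcompl j hx)).2
        (Finset.mem_biUnion.mpr ⟨r', Finset.mem_univ r', hx'⟩)
    · exact hUDisj j j' (by simpa using hne)
  -- crossing predicate: interval X t contains the right endpoint of At i, which is < m
  set Q : (Fin n ⊕ Fin k) → Fin n → Prop :=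
    fun t i => ∃ b, b ∈ At i ∧ b + 1 ∉ At i ∧ b < m ∧ b ∈ X t with hQdef
  -- each interval X t intersects at most 1 + (# crossings of t) of the At i
  have key : ∀ t, (Finset.univ.filter fun i => (X t ∩ At i).Nonempty).card
      ≤ 1 + (Finset.univ.filter fun i => Q t i).card := by
    intro t
    rcases (X t).eq_empty_or_nonempty with he | hne
    · simp [he]
    set M := (X t).max' hne with hM
    have hMX : M ∈ X t := (X t).max'_mem hne
    have hMm : M ≤ m := (Finset.mem_Icc.mp (hXsub t hMX)).2
    obtain ⟨i0, -, hi0⟩ := Finset.mem_biUnion.mp (hAtUnion ▸ hXsub t hMX)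
    have hsub : (Finset.univ.filter fun i => (X t ∩ At i).Nonempty)
        ⊆ insert i0 (Finset.univ.filter fun i => Q t i) := by
      intro i hi
      rw [Finset.mem_filter] at hi
      obtain ⟨a, ha⟩ := hi.2
      rw [Finset.mem_inter] at ha
      by_cases hii : i = i0
      · subst hii; exact Finset.mem_insert_self _ _
      refine Finset.mem_insert_of_mem (Finset.mem_filter.mpr ⟨Finset.mem_univ i, ?_⟩)
      have hAne : (At i).Nonempty := ⟨a, ha.2⟩
      set b := (At i).max' hAne with hb
      have hbA : b ∈ At i := (At i).max'_mem hAne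
      have hab : a ≤ b := Finset.le_max' _ _ ha.2
      have hMni : M ∉ At i := fun h => Finset.disjoint_left.mp (hAtDisj i i0 hii) h hi0
      have haM : a ≤ M := Finset.le_max' _ _ ha.1
      have hbM : b < M := by
        by_contra h
        push_neg at h
        exact hMni (hAtInt i a M b ha.2 hbA haM h)
      refine ⟨b, hbA, ?_, by omega, hXInt t a b M ha.1 hMX hab (le_of_lt hbM)⟩
      intro h
      exact absurd (Finset.le_max' _ _ h) (by omega)
    calc (Finset.univ.filter fun i => (X t ∩ At i).Nonempty).card
        ≤ (insert i0 (Finset.univ.filter fun i => Q t i)).card := Finset.card_le_card hsub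
      _ ≤ 1 + (Finset.univ.filter fun i => Q t i).card := by
          have := Finset.card_insert_le i0 (Finset.univ.filter fun i => Q t i)
          omega
  -- the index im whose block contains m
  obtain ⟨im, -, him⟩ := Finset.mem_biUnion.mp
    (hAtUnion ▸ Finset.mem_Icc.mpr ⟨hm, le_refl m⟩)
  -- for each i, at most one t crosses At i's right boundary
  have huniq : ∀ i, (Finset.univ.filter fun t : Fin n ⊕ Fin k => Q t i).card ≤ 1 := by
    intro i
    apply Finset.card_le_one.mpr
    intro t ht t' ht'
    rw [Finset.mem_filter] at ht ht'
    obtain ⟨b, hb1, hb2, hb3, hb4⟩ := ht.2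
    obtain ⟨b', hb1', hb2', hb3', hb4'⟩ := ht'.2
    have hbb : b = b' := by
      by_contra h
      rcases Nat.lt_or_ge b b' with hlt | hge
      · exact hb2 (hAtInt i b (b + 1) b' hb1 hb1' (by omega) (by omega))
      · exact hb2' (hAtInt i b' (b' + 1) b hb1' hb1 (by omega) (by omega))
    by_contra hne
    exact Finset.disjoint_left.mp (hXDisj t t' hne) hb4 (hbb ▸ hb4')
  -- no t crosses At im's right boundary
  have hzero : (Finset.univ.filter fun t : Fin n ⊕ Fin k => Q t im).card = 0 := by
    rw [Finset.card_eq_zero, Finset.filter_eq_empty_iff]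
    rintro t - ⟨b, hb1, hb2, hb3, hb4⟩
    exact hb2 (hAtInt im b (b + 1) m hb1 him (by omega) (by omega))
  -- total number of crossings ≤ n - 1
  have hdsum : ∑ t : Fin n ⊕ Fin k, (Finset.univ.filter fun i => Q t i).card ≤ n - 1 := by
    have hswap : ∑ t : Fin n ⊕ Fin k, (Finset.univ.filter fun i => Q t i).card
        = ∑ i : Fin n, (Finset.univ.filter fun t : Fin n ⊕ Fin k => Q t i).card := by
      simp only [Finset.card_filter]
      rw [Finset.sum_comm]
    rw [hswap, ← Finset.sum_erase (Finset.univ : Finset (Fin n)) hzero]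
    calc ∑ i ∈ Finset.univ.erase im, (Finset.univ.filter fun t : Fin n ⊕ Fin k => Q t i).card
        ≤ ∑ _i ∈ Finset.univ.erase im, 1 := Finset.sum_le_sum fun i _ => huniq i
      _ = n - 1 := by
          simp [Finset.card_erase_of_mem]
  -- k ≤ n + 1
  have hmin : ∀ j : Fin k, (U j).min' (hUNe j) = 1 ∨ ∃ r, (U j).min' (hUNe j) - 1 ∈ P r := by
    intro j
    set a := (U j).min' (hUNe j) with ha
    have haU : a ∈ U j := (U j).min'_mem (hUNe j)
    have haI : a ∈ Finset.Icc 1 m := (Finset.mem_sdiff.mp (hUcompl j haU)).1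
    rw [Finset.mem_Icc] at haI
    by_cases h1 : a = 1
    · exact Or.inl h1
    right
    by_contra hno
    push_neg at hno
    have hnotP : a - 1 ∉ Finset.univ.biUnion P := by
      rw [Finset.mem_biUnion]
      rintro ⟨r, -, hr⟩
      exact hno r hr
    have hmem : a - 1 ∈ Finset.univ.biUnion U := by
      rw [hUUnion]
      exact Finset.mem_sdiff.mpr ⟨Finset.mem_Icc.mpr ⟨by omega, by omega⟩, hnotP⟩
    obtain ⟨j', -, hj'⟩ := Finset.mem_biUnion.mp hmem
    have hjj : j' ≠ j := by
      rintro rfl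
      have := Finset.min'_le _ _ hj'
      omega
    have hUj'lt : ∀ w ∈ U j', w < a := by
      intro w hw
      by_contra hwa
      push_neg at hwa
      have hmem2 : a ∈ U j' := hUInt j' (a - 1) a w hj' hw (by omega) hwa
      exact Finset.disjoint_left.mp (hUDisj j' j hjj) hmem2 haU
    have hUjge : ∀ w ∈ U j, a ≤ w := fun w hw => Finset.min'_le _ _ hw
    have hTint : IsInterval (U j ∪ U j') := by
      intro x y z hx hz hxy hyz
      rcases Finset.mem_union.mp hx with hx1 | hx2 <;>
        rcases Finset.mem_union.mp hz with hz1 | hz2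
      · exact Finset.mem_union_left _ (hUInt j x y z hx1 hz1 hxy hyz)
      · exact absurd (le_trans hxy hyz)
          (by have := hUjge x hx1; have := hUj'lt z hz2; omega)
      · rcases Nat.lt_or_ge y a with hy | hy
        · exact Finset.mem_union_right _ (hUInt j' x y (a - 1) hx2 hj' hxy (by omega))
        · exact Finset.mem_union_left _ (hUInt j a y z haU hz1 hy hyz)
      · exact Finset.mem_union_right _ (hUInt j' x y z hx2 hz2 hxy hyz)
    have hTsub : U j ∪ U j' ⊆ Finset.Icc 1 m \ Finset.univ.biUnion P :=
      Finset.union_subset (hUcompl j) (hUcompl j')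
    have hT := hUMax j _ hTint Finset.subset_union_left hTsub
    have hmem3 : a - 1 ∈ U j := hT ▸ Finset.mem_union_right _ hj'
    have := Finset.min'_le _ _ hmem3
    omega
  have hk : k ≤ n + 1 := by
    set f : Fin k → Option (Fin n) := fun j =>
      if h : ∃ r, (U j).min' (hUNe j) - 1 ∈ P r then some h.choose else none with hf
    have hinj : Function.Injective f := by
      intro j j' hjj
      by_contra hne
      have hmne : (U j).min' (hUNe j) ≠ (U j').min' (hUNe j') := by
        intro h
        exact Finset.disjoint_left.mp (hUDisj j j' hne) ((U j).min'_mem _)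
          (h ▸ (U j').min'_mem _)
      by_cases h1 : ∃ r, (U j).min' (hUNe j) - 1 ∈ P r
      · by_cases h2 : ∃ r, (U j').min' (hUNe j') - 1 ∈ P r
        · rw [hf] at hjj
          simp only [dif_pos h1, dif_pos h2, Option.some.injEq] at hjj
          set a := (U j).min' (hUNe j) with ha
          set a' := (U j').min' (hUNe j') with ha'
          have hr1 : a - 1 ∈ P h1.choose := h1.choose_spec
          have hr2 : a' - 1 ∈ P h1.choose := hjj ▸ h2.choose_spec
          have haU : a ∈ U j := (U j).min'_mem (hUNe j)
          have haU' : a' ∈ U j' := (U j').min'_mem (hUNe j')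
          have hc1 := Finset.mem_sdiff.mp (hUcompl j haU)
          have hc2 := Finset.mem_sdiff.mp (hUcompl j' haU')
          have ha1 : 1 ≤ a := (Finset.mem_Icc.mp hc1.1).1
          have ha1' : 1 ≤ a' := (Finset.mem_Icc.mp hc2.1).1
          rcases lt_or_gt_of_ne hmne with h | h
          · exact hc1.2 (Finset.mem_biUnion.mpr ⟨h1.choose, Finset.mem_univ _,
              hPInt _ (a - 1) a (a' - 1) hr1 hr2 (by omega) (by omega)⟩)
          · exact hc2.2 (Finset.mem_biUnion.mpr ⟨h1.choose, Finset.mem_univ _,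
              hPInt _ (a' - 1) a' (a - 1) hr2 hr1 (by omega) (by omega)⟩)
        · rw [hf] at hjj
          simp only [dif_pos h1, dif_neg h2] at hjj
          exact Option.some_ne_none _ hjj
      · by_cases h2 : ∃ r, (U j').min' (hUNe j') - 1 ∈ P r
        · rw [hf] at hjj
          simp only [dif_neg h1, dif_pos h2] at hjj
          exact Option.some_ne_none _ hjj.symm
        · exact hmne (((hmin j).resolve_right h1).trans
            (((hmin j').resolve_right h2).symm))
    have := Fintype.card_le_of_injective f hinj
    simpa using this
  -- assemble
  have hsplit : ∑ i : Fin n,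
        ((Finset.univ.filter (fun r : Fin n => (P r ∩ At i).Nonempty)).card +
         (Finset.univ.filter (fun j : Fin k => (U j ∩ At i).Nonempty)).card)
      = ∑ t : Fin n ⊕ Fin k, (Finset.univ.filter fun i => (X t ∩ At i).Nonempty).card := by
    rw [Fintype.sum_sum_type]
    rw [Finset.sum_add_distrib]
    congr 1
    · simp only [Finset.card_filter]
      rw [Finset.sum_comm]
      rfl
    · simp only [Finset.card_filter]
      rw [Finset.sum_comm]
      rfl
  rw [hsplit]
  calc ∑ t : Fin n ⊕ Fin k, (Finset.univ.filter fun i => (X t ∩ At i).Nonempty).card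
      ≤ ∑ t : Fin n ⊕ Fin k, (1 + (Finset.univ.filter fun i => Q t i).card) :=
        Finset.sum_le_sum fun t _ => key t
    _ = (n + k) + ∑ t : Fin n ⊕ Fin k, (Finset.univ.filter fun i => Q t i).card := by
        rw [Finset.sum_add_distrib]
        simp
    _ ≤ (n + k) + (n - 1) := by omega
    _ ≤ 3 * n := by omega
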